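/- Let p ≥ 2 and 0 < δ ≤ γ, and suppose (δ,p) satisfies δ > (p−1)²/4 when p > 2 (δ > 0 suffices when p = 2). Let u ∈ C¹(ℝ^N) be a positive stable weak solution of −div(w(x)|∇u|^{p−2}∇u) = −g(x)(u^{−δ} + u^{−γ}) in ℝ^N. Then for every β ∈ (0, s_p) there exists a constant c = c(β,p) > 0 such that for every nonnegative ψ ∈ C_c¹(ℝ^N): ∫_{ℝ^N} g(x)(u^{−δ} + u^{−γ}) u^{−2β−p+1} ψ^p dx ≤ c ∫_{ℝ^N} w(x) u^{−2β} |∇ψ|^p dx. -/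

import Mathlib

open MeasureTheory
open scoped RealInnerProductSpace

section Infra
variable {N : ℕ}
local notation "E" => EuclideanSpace ℝ (Fin N)

lemma loc_mul_integrable {f h : E → ℝ}
    (hf : LocallyIntegrable f volume) (hc : Continuous h) (hs : HasCompactSupport h) :
    Integrable (fun x => f x * h x) volume := by
  have h1 : IntegrableOn f (tsupport h) volume := hf.integrableOn_isCompact hs
  obtain ⟨C, hC⟩ := hs.exists_bound_of_continuous hc
  have h2 : IntegrableOn (fun x => f x * h x) (tsupport h) volume := by
    have := Integrable.bdd_mul (c := C) h1 (hc.aestronglyMeasurable.restrict)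
      (Filter.Eventually.of_forall fun x => hC x)
    simpa [mul_comm, IntegrableOn] using this
  refine (integrableOn_iff_integrable_of_support_subset ?_).mp h2
  intro x hx
  simp only [Function.mem_support] at hx
  by_contra hxx
  exact hx (by simp [image_eq_zero_of_notMem_tsupport hxx])

lemma young_exists (θ : ℝ) (hθ0 : 0 ≤ θ) (hθ1 : θ < 1) {ε : ℝ} (hε : 0 < ε) :
    ∃ C : ℝ, 0 < C ∧ ∀ A B : ℝ, 0 ≤ A → 0 ≤ B → A ^ θ * B ^ (1 - θ) ≤ ε * A + C * B := by
  rcases eq_or_lt_of_le hθ0 with h0 | h0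
  · refine ⟨1, one_pos, fun A B hA hB => ?_⟩
    rw [← h0]
    simp only [Real.rpow_zero, sub_zero, Real.rpow_one, one_mul]
    nlinarith
  · have h1θ : 0 < 1 - θ := by linarith
    refine ⟨(1 - θ) * (θ / ε) ^ (θ / (1 - θ)), by positivity, fun A B hA hB => ?_⟩
    have h2 : ((θ/ε) ^ (θ/(1-θ))) ^ (1-θ) = (θ/ε) ^ θ := by
      rw [← Real.rpow_mul (by positivity), div_mul_cancel₀ _ (ne_of_gt h1θ)]
    have key := Real.geom_mean_le_arith_mean2_weighted (w₁ := θ) (w₂ := 1 - θ)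
      (p₁ := (ε / θ) * A) (p₂ := (θ / ε) ^ (θ / (1 - θ)) * B)
      (le_of_lt h0) (le_of_lt h1θ) (by positivity) (by positivity) (by ring)
    have e1 : ((ε / θ) * A) ^ θ * ((θ / ε) ^ (θ / (1 - θ)) * B) ^ (1 - θ)
        = A ^ θ * B ^ (1 - θ) := by
      rw [Real.mul_rpow (by positivity) hA, Real.mul_rpow (by positivity) hB, h2]
      have e2 : (ε / θ) ^ θ * A ^ θ * ((θ / ε) ^ θ * B ^ (1-θ))
          = ((ε/θ)^θ * (θ/ε)^θ) * (A^θ * B^(1-θ)) := by ring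
      rw [e2, ← Real.mul_rpow (by positivity) (by positivity),
        show ε/θ*(θ/ε) = 1 by field_simp, Real.one_rpow, one_mul]
    rw [e1] at key
    calc A ^ θ * B ^ (1 - θ) ≤ θ * ((ε/θ) * A) + (1-θ) * ((θ/ε) ^ (θ/(1-θ)) * B) := key
    _ = ε * A + (1 - θ) * (θ / ε) ^ (θ / (1 - θ)) * B := by field_simp

lemma key_numeric (p δ β sp : ℝ) (hp : 2 ≤ p) (hδ : 0 < δ)
    (hcond : 2 < p → (p - 1) ^ 2 / 4 < δ)
    (hsp : sp = if p = 2 then δ + Real.sqrt (δ ^ 2 + δ) else 2 * δ / (p - 1) - (p - 1) / 2)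
    (hβ0 : 0 < β) (hβs : β < sp) :
    (p - 1) * (β + (p - 2) / 2) ^ 2 < δ * (2 * β + p - 1) := by
  rcases eq_or_lt_of_le hp with h2 | h2
  · subst h2
    rw [if_pos rfl] at hsp
    have hs : Real.sqrt (δ ^ 2 + δ) ^ 2 = δ ^ 2 + δ := Real.sq_sqrt (by positivity)
    have hs0 : 0 ≤ Real.sqrt (δ ^ 2 + δ) := Real.sqrt_nonneg _
    subst hsp
    have hsδ : δ < Real.sqrt (δ ^ 2 + δ) := by nlinarith
    have h1 : 0 < δ + Real.sqrt (δ ^ 2 + δ) - β := by linarith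
    have h2 : 0 < β - δ + Real.sqrt (δ ^ 2 + δ) := by linarith
    nlinarith [mul_pos h1 h2]
  · rw [if_neg (by linarith)] at hsp
    have hδ2 : (p - 1) ^ 2 / 4 < δ := hcond h2
    have hp1 : 0 < p - 1 := by linarith
    have hβs' : (β + (p-1)/2) * (p-1) < 2 * δ := by
      rw [← lt_div_iff₀ hp1]
      subst hsp; linarith
    have h4 : 0 < 2*β+p-1 := by linarith
    nlinarith [mul_pos h4 (by linarith : 0 < 2*δ - (β+(p-1)/2)*(p-1)),
      mul_pos hp1 hβ0, mul_pos (mul_pos hp1 hβ0) hβ0, sq_nonneg (β + (p-2)/2)]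

lemma grad_rpow_mul (u ψ : E → ℝ) (hu : ContDiff ℝ 1 u) (hψ : ContDiff ℝ 1 ψ)
    (hu_pos : ∀ x, 0 < u x) (c q : ℝ) (hq : 1 ≤ q) (x : E) :
    gradient (fun y => u y ^ c * ψ y ^ q) x
      = (c * u x ^ (c - 1) * ψ x ^ q) • gradient u x
        + (q * ψ x ^ (q - 1) * u x ^ c) • gradient ψ x := by
  have hud : DifferentiableAt ℝ u x := (hu.differentiable one_ne_zero).differentiableAt
  have hψd : DifferentiableAt ℝ ψ x := (hψ.differentiable one_ne_zero).differentiableAt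
  have h1 : HasFDerivAt (fun y => u y ^ c) ((c * u x ^ (c - 1)) • fderiv ℝ u x) x :=
    (Real.hasDerivAt_rpow_const (Or.inl (hu_pos x).ne')).comp_hasFDerivAt x hud.hasFDerivAt
  have h2 : HasFDerivAt (fun y => ψ y ^ q) ((q * ψ x ^ (q - 1)) • fderiv ℝ ψ x) x :=
    (Real.hasDerivAt_rpow_const (Or.inr hq)).comp_hasFDerivAt x hψd.hasFDerivAt
  have h4 := hasFDerivAt_iff_hasGradientAt.mp (h1.mul h2)
  rw [show (fun y => u y ^ c * ψ y ^ q) = ((fun y => u y ^ c) * fun y => ψ y ^ q) from rfl,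
    h4.gradient]
  simp only [_root_.map_add, _root_.map_smul, gradient, smul_smul]
  module

lemma grad_continuous (u : E → ℝ) (hu : ContDiff ℝ 1 u) : Continuous (gradient u) :=
  (LinearIsometryEquiv.continuous _).comp (hu.continuous_fderiv one_ne_zero)

lemma grad_support (ψ : E → ℝ) (hs : HasCompactSupport ψ) :
    HasCompactSupport (gradient ψ) := by
  refine (hs.fderiv ℝ).comp_left (g := (InnerProductSpace.toDual ℝ E).symm) ?_
  simp

lemma contDiff_rpow_of_pos {u : E → ℝ} (hu : ContDiff ℝ 1 u) (hpos : ∀ x, 0 < u x) (c : ℝ) :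
    ContDiff ℝ 1 fun x => u x ^ c := by
  rw [contDiff_one_iff_fderiv]
  have hD : ∀ x : E, HasFDerivAt (fun y => u y ^ c) ((c * u x ^ (c - 1)) • fderiv ℝ u x) x :=
    fun x => (Real.hasDerivAt_rpow_const (Or.inl (hpos x).ne')).comp_hasFDerivAt x
      ((hu.differentiable one_ne_zero).differentiableAt).hasFDerivAt
  refine ⟨fun x => (hD x).differentiableAt, ?_⟩
  have heq : (fderiv ℝ fun x => u x ^ c) = fun x => (c * u x ^ (c - 1)) • fderiv ℝ u x :=
    funext fun x => (hD x).fderiv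
  rw [heq]
  exact (continuous_const.mul (hu.continuous.rpow_const fun x => Or.inl (hpos x).ne')).smul
    (hu.continuous_fderiv one_ne_zero)

lemma contDiff_rpow_of_one_le {ψ : E → ℝ} (hψ : ContDiff ℝ 1 ψ) {q : ℝ} (hq : 1 ≤ q) :
    ContDiff ℝ 1 fun x => ψ x ^ q := by
  rw [contDiff_one_iff_fderiv]
  have hD : ∀ x : E, HasFDerivAt (fun y => ψ y ^ q) ((q * ψ x ^ (q - 1)) • fderiv ℝ ψ x) x :=
    fun x => (Real.hasDerivAt_rpow_const (Or.inr hq)).comp_hasFDerivAt x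
      ((hψ.differentiable one_ne_zero).differentiableAt).hasFDerivAt
  refine ⟨fun x => (hD x).differentiableAt, ?_⟩
  have heq : (fderiv ℝ fun x => ψ x ^ q) = fun x => (q * ψ x ^ (q - 1)) • fderiv ℝ ψ x :=
    funext fun x => (hD x).fderiv
  rw [heq]
  exact (continuous_const.mul (hψ.continuous.rpow_const fun x => Or.inr (by linarith))).smul
    (hψ.continuous_fderiv one_ne_zero)

lemma norm_add_sq_le' (v w : E) {ε : ℝ} (hε : 0 < ε) :
    ‖v + w‖ ^ 2 ≤ (1 + ε) * ‖v‖ ^ 2 + (1 + 1/ε) * ‖w‖ ^ 2 := by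
  have h2 : ‖v + w‖ ^ 2 ≤ (‖v‖ + ‖w‖) ^ 2 :=
    pow_le_pow_left₀ (norm_nonneg _) (norm_add_le v w) 2
  have key : 2 * (‖v‖ * ‖w‖) ≤ ε * ‖v‖ ^ 2 + (1/ε) * ‖w‖ ^ 2 := by
    rw [← sub_nonneg]
    have h3 : ε * ‖v‖ ^ 2 + (1/ε) * ‖w‖ ^ 2 - 2 * (‖v‖ * ‖w‖) = (ε * ‖v‖ - ‖w‖) ^ 2 / ε := by
      field_simp; ring
    rw [h3]; positivity
  nlinarith [h2, key]

lemma sq_rpow' {x : ℝ} (hx : 0 ≤ x) (c : ℝ) : (x ^ c) ^ (2:ℕ) = x ^ (c * 2) := by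
  rw [← Real.rpow_natCast (x ^ c) 2, ← Real.rpow_mul hx]
  norm_num

lemma rpow_sub2_mul_sq {x p : ℝ} (hx : 0 ≤ x) (hp : 2 ≤ p) : x ^ (p-2) * x ^ (2:ℕ) = x ^ p := by
  rw [← Real.rpow_natCast x 2, ← Real.rpow_add_of_nonneg hx (by linarith) (by norm_num)]
  norm_num

lemma rpow_sub2_mul_self {x p : ℝ} (hx : 0 ≤ x) (hp : 2 ≤ p) : x ^ (p-2) * x = x ^ (p-1) := by
  nth_rewrite 2 [← Real.rpow_one x]
  rw [← Real.rpow_add_of_nonneg hx (by linarith) (by norm_num)]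
  ring_nf

end Infra

set_option maxHeartbeats 2000000 in
theorem stmt_2
    {N : ℕ} (hN : 1 ≤ N)
    (p : ℝ) (hp : 2 ≤ p)
    (δ γ : ℝ) (hδ : 0 < δ) (hδγ : δ ≤ γ)
    (hcond : 2 < p → (p - 1) ^ 2 / 4 < δ)
    (sp : ℝ) (hsp : sp = if p = 2 then δ + Real.sqrt (δ ^ 2 + δ) else 2 * δ / (p - 1) - (p - 1) / 2)
    (w g : EuclideanSpace ℝ (Fin N) → ℝ)
    (hw_loc : LocallyIntegrable w volume)
    (hg_loc : LocallyIntegrable g volume)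
    (hw_pos : ∀ᵐ x ∂volume, 0 < w x)
    (hg_pos : ∀ᵐ x ∂volume, 0 < g x)
    (hginv : MemLp (fun x => (g x)⁻¹) ⊤ volume)
    (u : EuclideanSpace ℝ (Fin N) → ℝ)
    (hu : ContDiff ℝ 1 u)
    (hu_pos : ∀ x, 0 < u x)
    (weak : ∀ φ : EuclideanSpace ℝ (Fin N) → ℝ, ContDiff ℝ 1 φ → HasCompactSupport φ →
      ∫ x, w x * ‖gradient u x‖ ^ (p - 2) * ⟪gradient u x, gradient φ x⟫
        = ∫ x, g x * (-(u x ^ (-δ)) - u x ^ (-γ)) * φ x)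
    (stable : ∀ φ : EuclideanSpace ℝ (Fin N) → ℝ, ContDiff ℝ 1 φ → HasCompactSupport φ →
      ∫ x, g x * (δ * u x ^ (-δ - 1) + γ * u x ^ (-γ - 1)) * φ x ^ 2
        ≤ (p - 1) * ∫ x, w x * ‖gradient u x‖ ^ (p - 2) * ‖gradient φ x‖ ^ 2) :
    ∀ β ∈ Set.Ioo (0 : ℝ) sp, ∃ c : ℝ, 0 < c ∧
      ∀ ψ : EuclideanSpace ℝ (Fin N) → ℝ, ContDiff ℝ 1 ψ → HasCompactSupport ψ →
        (∀ x, 0 ≤ ψ x) →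
        ∫ x, g x * (u x ^ (-δ) + u x ^ (-γ)) * u x ^ (-2 * β - p + 1) * ψ x ^ p
          ≤ c * ∫ x, w x * u x ^ (-2 * β) * ‖gradient ψ x‖ ^ p := by
  intro β hβ
  obtain ⟨hβ0, hβs⟩ := hβ
  have hp0 : (0:ℝ) < p := by linarith
  have hp1 : (0:ℝ) < p - 1 := by linarith
  have hp2 : (0:ℝ) ≤ p - 2 := by linarith
  set τ : ℝ := β + (p - 2) / 2 with hτ
  clear_value τ
  have hτ0 : 0 < τ := by rw [hτ]; linarith
  have hkey : (p - 1) * τ ^ 2 < δ * (2 * τ + 1) := by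
    have hthis := key_numeric p δ β sp hp hδ hcond hsp hβ0 hβs
    have e : 2*(β+(p-2)/2)+1 = 2*β+p-1 := by ring
    rw [hτ, e]; exact hthis
  set ρ : ℝ := δ * (2 * τ + 1) - (p - 1) * τ ^ 2 with hρdef
  clear_value ρ
  have hρ : 0 < ρ := by rw [hρdef]; linarith
  set ε : ℝ := ρ / (4 * ((p - 1) * τ ^ 2 + 1)) with hεdef
  clear_value ε
  have hε : 0 < ε := by rw [hεdef]; positivity
  set Q : ℝ := (p - 1) * (1 + 1 / ε) * (p ^ 2 / 4) with hQdef
  clear_value Q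
  have hQ : 0 < Q := by rw [hQdef]; positivity
  set η₂ : ℝ := ρ / (4 * (Q + 1)) with hη₂def
  clear_value η₂
  have hη₂ : 0 < η₂ := by rw [hη₂def]; positivity
  set η₁ : ℝ := ρ / (4 * p * δ) with hη₁def
  clear_value η₁
  have hη₁ : 0 < η₁ := by rw [hη₁def]; positivity
  obtain ⟨C₁, hC₁pos, hC₁⟩ := young_exists ((p-1)/p)
    (by positivity) (by rw [div_lt_one hp0]; linarith) hη₁
  obtain ⟨C₂, hC₂pos, hC₂⟩ := young_exists ((p-2)/p)
    (by positivity) (by rw [div_lt_one hp0]; linarith) hη₂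
  set d : ℝ := 2 * τ + 1 - p * η₁ with hddef
  clear_value d
  have hρle : ρ ≤ δ * (2 * τ + 1) := by rw [hρdef]; nlinarith only [mul_nonneg hp1.le (sq_nonneg τ)]
  have hpη₁ : p * η₁ = ρ / (4 * δ) := by rw [hη₁def]; field_simp
  have hd : 0 < d := by
    rw [hddef, hpη₁, sub_pos, div_lt_iff₀ (by positivity : (0:ℝ) < 4*δ)]
    nlinarith only [hρle, hτ0, hδ]
  set A1 : ℝ := (p - 1) * (1 + ε) * τ ^ 2 + Q * η₂ with hA1def
  clear_value A1
  have hA1 : 0 < A1 := by rw [hA1def]; positivity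
  have hb1 : (p - 1) * ε * τ ^ 2 ≤ ρ / 4 := by
    rw [hεdef, show (p-1) * (ρ/(4*((p-1)*τ^2+1))) * τ^2 = ρ*((p-1)*τ^2) / (4*((p-1)*τ^2+1)) by ring,
      div_le_div_iff₀ (by positivity) (by norm_num)]
    nlinarith only [mul_nonneg hp1.le (sq_nonneg τ), hρ]
  have hb2 : Q * η₂ ≤ ρ / 4 := by
    rw [hη₂def, show Q * (ρ/(4*(Q+1))) = ρ*Q/(4*(Q+1)) by ring,
      div_le_div_iff₀ (by positivity : (0:ℝ) < 4*(Q+1)) (by norm_num)]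
    nlinarith only [mul_pos hρ hQ, hρ]
  have hδd : A1 + ρ / 4 ≤ δ * d := by
    have e1 : δ * d = δ * (2 * τ + 1) - ρ / 4 := by
      rw [hddef, hpη₁]; field_simp
    rw [e1, hA1def]
    nlinarith only [hb1, hb2, hρ, hρdef, hkey]
  have hden : 0 < δ * d - A1 := by linarith only [hδd, hρ]
  refine ⟨(A1 * (p * C₁) + (Q * C₂) * d) / (δ * d - A1) + 1, ?_, ?_⟩
  · have : 0 ≤ (A1 * (p * C₁) + (Q * C₂) * d) / (δ * d - A1) :=
      div_nonneg (by positivity) hden.le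
    linarith only [this]
  intro ψ hψ hψc hψ0
  -- continuity / support toolkit
  have hucont := hu.continuous
  have hψcont := hψ.continuous
  have hcgu : Continuous (gradient u) := grad_continuous u hu
  have hcgψ : Continuous (gradient ψ) := grad_continuous ψ hψ
  have contU : ∀ c : ℝ, Continuous fun x => u x ^ c :=
    fun c => hucont.rpow_const fun x => Or.inl (hu_pos x).ne'
  have contPsi : ∀ c : ℝ, 0 ≤ c → Continuous fun x => ψ x ^ c :=
    fun c hc => hψcont.rpow_const fun x => Or.inr hc
  have contNu : ∀ c : ℝ, 0 ≤ c → Continuous fun x => ‖gradient u x‖ ^ c :=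
    fun c hc => hcgu.norm.rpow_const fun x => Or.inr hc
  have contNψ : ∀ c : ℝ, 0 ≤ c → Continuous fun x => ‖gradient ψ x‖ ^ c :=
    fun c hc => hcgψ.norm.rpow_const fun x => Or.inr hc
  have cptPsi : ∀ c : ℝ, c ≠ 0 → HasCompactSupport fun x => ψ x ^ c :=
    fun c hc => hψc.comp_left (g := fun y : ℝ => y ^ c) (Real.zero_rpow hc)
  have cptGψ : HasCompactSupport (gradient ψ) := grad_support ψ hψc
  have cptNψ : HasCompactSupport fun x => ‖gradient ψ x‖ :=
    cptGψ.comp_left (g := fun v : EuclideanSpace ℝ (Fin N) => ‖v‖) norm_zero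
  -- the six integrands
  set LIf : EuclideanSpace ℝ (Fin N) → ℝ :=
    fun x => g x * (u x ^ (-δ) + u x ^ (-γ)) * u x ^ (-2 * β - p + 1) * ψ x ^ p with hLIdef
  set RI : EuclideanSpace ℝ (Fin N) → ℝ :=
    fun x => w x * u x ^ (-2 * β) * ‖gradient ψ x‖ ^ p with hRIdef
  set II : EuclideanSpace ℝ (Fin N) → ℝ :=
    fun x => w x * (‖gradient u x‖ ^ p * (u x ^ (-2*β-p) * ψ x ^ p)) with hIIdef
  set JI : EuclideanSpace ℝ (Fin N) → ℝ :=
    fun x => w x * (‖gradient u x‖ ^ (p-1) * (u x ^ (-2*β-p+1) * (ψ x ^ (p-1) * ‖gradient ψ x‖))) with hJIdef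
  set KI : EuclideanSpace ℝ (Fin N) → ℝ :=
    fun x => w x * (‖gradient u x‖ ^ (p-2) * (u x ^ (-2*β-p+2) * (ψ x ^ (p-2) * ‖gradient ψ x‖ ^ (2:ℕ)))) with hKIdef
  set MI : EuclideanSpace ℝ (Fin N) → ℝ :=
    fun x => w x * (‖gradient u x‖ ^ (p-2) * (u x ^ (-2*β-p+1) * (ψ x ^ (p-1) * ⟪gradient u x, gradient ψ x⟫))) with hMIdef
  -- more support facts
  have cptNψp : HasCompactSupport fun x => ‖gradient ψ x‖ ^ p :=
    cptGψ.comp_left (g := fun v : EuclideanSpace ℝ (Fin N) => ‖v‖ ^ p)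
      (by simp [Real.zero_rpow (ne_of_gt hp0)])
  have cptNψ2 : HasCompactSupport fun x => ‖gradient ψ x‖ ^ (2:ℕ) :=
    cptGψ.comp_left (g := fun v : EuclideanSpace ℝ (Fin N) => ‖v‖ ^ (2:ℕ)) (by simp)
  have cptInner : HasCompactSupport fun x => (⟪gradient u x, gradient ψ x⟫ : ℝ) := by
    refine cptGψ.mono ?_
    intro x hx
    simp only [Function.mem_support] at hx ⊢
    intro h0
    exact hx (by rw [h0, inner_zero_right])
  -- integrability
  have hIntLI : Integrable LIf volume := by
    have e : LIf = fun x => g x *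
        (((u x ^ (-δ) + u x ^ (-γ)) * u x ^ (-2*β-p+1)) * ψ x ^ p) := by
      funext x; simp only [hLIdef]; ring
    rw [e]
    exact loc_mul_integrable hg_loc
      ((((contU (-δ)).add (contU (-γ))).mul (contU (-2*β-p+1))).mul (contPsi p hp0.le))
      (HasCompactSupport.mul_left (cptPsi p hp0.ne'))
  have hIntRI : Integrable RI volume := by
    have e : RI = fun x => w x * (u x ^ (-2*β) * ‖gradient ψ x‖ ^ p) := by
      funext x; simp only [hRIdef]; ring
    rw [e]
    exact loc_mul_integrable hw_loc ((contU (-2*β)).mul (contNψ p hp0.le))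
      (HasCompactSupport.mul_left cptNψp)
  have hIntII : Integrable II volume := by
    rw [hIIdef]
    exact loc_mul_integrable hw_loc
      ((contNu p hp0.le).mul ((contU (-2*β-p)).mul (contPsi p hp0.le)))
      (HasCompactSupport.mul_left (HasCompactSupport.mul_left (cptPsi p hp0.ne')))
  have hIntJI : Integrable JI volume := by
    rw [hJIdef]
    exact loc_mul_integrable hw_loc
      ((contNu (p-1) (by linarith)).mul ((contU (-2*β-p+1)).mul
        ((contPsi (p-1) (by linarith)).mul hcgψ.norm)))
      (HasCompactSupport.mul_left (HasCompactSupport.mul_left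
        (HasCompactSupport.mul_left cptNψ)))
  have hIntKI : Integrable KI volume := by
    rw [hKIdef]
    exact loc_mul_integrable hw_loc
      ((contNu (p-2) hp2).mul ((contU (-2*β-p+2)).mul
        ((contPsi (p-2) hp2).mul (hcgψ.norm.pow 2))))
      (HasCompactSupport.mul_left (HasCompactSupport.mul_left
        (HasCompactSupport.mul_left cptNψ2)))
  have hIntMI : Integrable MI volume := by
    rw [hMIdef]
    exact loc_mul_integrable hw_loc
      ((contNu (p-2) hp2).mul ((contU (-2*β-p+1)).mul
        ((contPsi (p-1) (by linarith)).mul (hcgu.inner hcgψ))))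
      (HasCompactSupport.mul_left (HasCompactSupport.mul_left
        (HasCompactSupport.mul_left cptInner)))
  -- nonnegativity of R
  have hRnn : 0 ≤ ∫ x, RI x := by
    refine integral_nonneg_of_ae ?_
    filter_upwards [hw_pos] with x hwx
    simp only [hRIdef]
    exact mul_nonneg (mul_nonneg hwx.le (Real.rpow_nonneg (hu_pos x).le _))
      (Real.rpow_nonneg (norm_nonneg _) _)
  -- step A : stability estimate
  have hA : δ * ∫ x, LIf x ≤ (p-1)*(1+ε)*τ^2 * (∫ x, II x) + Q * ∫ x, KI x := by
    set φ1 : EuclideanSpace ℝ (Fin N) → ℝ :=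
      fun x => u x ^ (-β-(p-2)/2) * ψ x ^ (p/2) with hφ1def
    have hφ1C : ContDiff ℝ 1 φ1 :=
      (contDiff_rpow_of_pos hu hu_pos _).mul (contDiff_rpow_of_one_le hψ (by linarith))
    have hφ1S : HasCompactSupport φ1 :=
      HasCompactSupport.mul_left (cptPsi (p/2) (by positivity))
    have hgrad1 : ∀ x, gradient φ1 x
        = ((-β-(p-2)/2) * u x ^ ((-β-(p-2)/2) - 1) * ψ x ^ (p/2)) • gradient u x
          + ((p/2) * ψ x ^ (p/2 - 1) * u x ^ (-β-(p-2)/2)) • gradient ψ x := by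
      intro x
      rw [hφ1def]
      exact grad_rpow_mul u ψ hu hψ hu_pos (-β-(p-2)/2) (p/2) (by linarith) x
    have hst := stable φ1 hφ1C hφ1S
    -- lower bound for the LHS of stability
    have hIntStL : Integrable
        (fun x => g x * (δ * u x ^ (-δ - 1) + γ * u x ^ (-γ - 1)) * φ1 x ^ 2) volume := by
      have e : (fun x => g x * (δ * u x ^ (-δ - 1) + γ * u x ^ (-γ - 1)) * φ1 x ^ 2)
          = fun x => g x * ((δ * u x ^ (-δ - 1) + γ * u x ^ (-γ - 1)) * φ1 x ^ 2) := by
        funext x; ring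
      rw [e]
      exact loc_mul_integrable hg_loc
        (((continuous_const.mul (contU (-δ-1))).add
          (continuous_const.mul (contU (-γ-1)))).mul (hφ1C.continuous.pow 2))
        (HasCompactSupport.mul_left
          (hφ1S.comp_left (g := fun y : ℝ => y ^ (2:ℕ)) (by norm_num)))
    have hlow : δ * ∫ x, LIf x
        ≤ ∫ x, g x * (δ * u x ^ (-δ - 1) + γ * u x ^ (-γ - 1)) * φ1 x ^ 2 := by
      rw [← integral_const_mul]
      refine integral_mono_ae (hIntLI.const_mul δ) hIntStL ?_
      filter_upwards [hg_pos] with x hgx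
      have hφsq : φ1 x ^ 2 = u x ^ (-2*β-p+2) * ψ x ^ p := by
        rw [hφ1def]
        rw [mul_pow, sq_rpow' (hu_pos x).le, sq_rpow' (hψ0 x),
          show (-β-(p-2)/2)*2 = -2*β-p+2 by ring, show (p/2)*2 = p by ring]
      have k1 : u x ^ (-δ-1) * u x ^ (-2*β-p+2) = u x ^ (-δ) * u x ^ (-2*β-p+1) := by
        rw [← Real.rpow_add (hu_pos x), ← Real.rpow_add (hu_pos x)]
        ring_nf
      have k2 : u x ^ (-γ-1) * u x ^ (-2*β-p+2) = u x ^ (-γ) * u x ^ (-2*β-p+1) := by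
        rw [← Real.rpow_add (hu_pos x), ← Real.rpow_add (hu_pos x)]
        ring_nf
      have base : 0 ≤ g x * (u x ^ (-γ) * u x ^ (-2*β-p+1) * ψ x ^ p) :=
        mul_nonneg hgx.le (mul_nonneg (mul_nonneg (Real.rpow_nonneg (hu_pos x).le _)
          (Real.rpow_nonneg (hu_pos x).le _)) (Real.rpow_nonneg (hψ0 x) _))
      calc δ * LIf x
          = g x * (δ * (u x ^ (-δ) * u x ^ (-2*β-p+1))
            + δ * (u x ^ (-γ) * u x ^ (-2*β-p+1))) * ψ x ^ p := by
            simp only [hLIdef]; ring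
        _ ≤ g x * (δ * (u x ^ (-δ) * u x ^ (-2*β-p+1))
            + γ * (u x ^ (-γ) * u x ^ (-2*β-p+1))) * ψ x ^ p := by
            nlinarith only [base, mul_nonneg (sub_nonneg.mpr hδγ) base]
        _ = g x * (δ * u x ^ (-δ - 1) + γ * u x ^ (-γ - 1)) * φ1 x ^ 2 := by
            rw [hφsq, ← k1, ← k2]
            ring
    -- upper bound for the RHS of stability
    have hIntSt2 : Integrable
        (fun x => w x * ‖gradient u x‖ ^ (p - 2) * ‖gradient φ1 x‖ ^ 2) volume := by
      have e : (fun x => w x * ‖gradient u x‖ ^ (p - 2) * ‖gradient φ1 x‖ ^ 2)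
          = fun x => w x * (‖gradient u x‖ ^ (p - 2) * ‖gradient φ1 x‖ ^ 2) := by
        funext x; ring
      rw [e]
      exact loc_mul_integrable hw_loc
        ((contNu (p-2) hp2).mul ((grad_continuous φ1 hφ1C).norm.pow 2))
        (HasCompactSupport.mul_left ((grad_support φ1 hφ1S).comp_left
          (g := fun v : EuclideanSpace ℝ (Fin N) => ‖v‖ ^ (2:ℕ)) (by simp)))
    have hup : ∫ x, w x * ‖gradient u x‖ ^ (p - 2) * ‖gradient φ1 x‖ ^ 2
        ≤ (1+ε)*τ^2 * (∫ x, II x) + ((1+1/ε)*(p^2/4)) * ∫ x, KI x := by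
      rw [← integral_const_mul, ← integral_const_mul,
        ← integral_add ((hIntII).const_mul _) ((hIntKI).const_mul _)]
      refine integral_mono_ae hIntSt2
        ((hIntII.const_mul _).add (hIntKI.const_mul _)) ?_
      filter_upwards [hw_pos] with x hwx
      have step1 : ‖gradient φ1 x‖ ^ 2
          ≤ (1+ε) * (τ^2 * (u x ^ (-2*β-p) * ψ x ^ p) * ‖gradient u x‖^(2:ℕ))
            + (1+1/ε) * ((p^2/4) * (u x ^ (-2*β-p+2) * ψ x ^ (p-2)) * ‖gradient ψ x‖^(2:ℕ)) := by
        rw [hgrad1 x]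
        refine le_trans (norm_add_sq_le' _ _ hε) ?_
        rw [norm_smul, norm_smul, mul_pow, mul_pow]
        simp only [Real.norm_eq_abs, sq_abs]
        have e1 : ((-β-(p-2)/2) * u x ^ ((-β-(p-2)/2) - 1) * ψ x ^ (p/2))^2
            = τ^2 * (u x ^ (-2*β-p) * ψ x ^ p) := by
          rw [mul_pow, mul_pow, sq_rpow' (hu_pos x).le, sq_rpow' (hψ0 x),
            show ((-β-(p-2)/2) - 1)*2 = -2*β-p by ring, show (p/2)*2 = p by ring, hτ]
          ring
        have e2 : ((p/2) * ψ x ^ (p/2 - 1) * u x ^ (-β-(p-2)/2))^2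
            = (p^2/4) * (u x ^ (-2*β-p+2) * ψ x ^ (p-2)) := by
          rw [mul_pow, mul_pow, sq_rpow' (hψ0 x), sq_rpow' (hu_pos x).le,
            show (p/2 - 1)*2 = p-2 by ring, show (-β-(p-2)/2)*2 = -2*β-p+2 by ring]
          ring
        rw [e1, e2]
      calc w x * ‖gradient u x‖ ^ (p - 2) * ‖gradient φ1 x‖ ^ 2
          ≤ w x * ‖gradient u x‖ ^ (p - 2)
            * ((1+ε) * (τ^2 * (u x ^ (-2*β-p) * ψ x ^ p) * ‖gradient u x‖^(2:ℕ))
              + (1+1/ε) * ((p^2/4) * (u x ^ (-2*β-p+2) * ψ x ^ (p-2)) * ‖gradient ψ x‖^(2:ℕ))) :=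
            mul_le_mul_of_nonneg_left step1
              (mul_nonneg hwx.le (Real.rpow_nonneg (norm_nonneg _) _))
        _ = (1+ε)*τ^2 * II x + ((1+1/ε)*(p^2/4)) * KI x := by
            simp only [hIIdef, hKIdef]
            rw [← rpow_sub2_mul_sq (norm_nonneg (gradient u x)) hp]
            ring
    have hmul := mul_le_mul_of_nonneg_left hup hp1.le
    rw [hQdef]
    nlinarith only [hlow, hst, hmul]
  -- step B : weak form identity
  have hB : (2*β+p-1) * ∫ x, II x = (∫ x, LIf x) + p * ∫ x, MI x := by
    set φ2 : EuclideanSpace ℝ (Fin N) → ℝ :=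
      fun x => u x ^ (-2*β-p+1) * ψ x ^ p with hφ2def
    have hφ2C : ContDiff ℝ 1 φ2 :=
      (contDiff_rpow_of_pos hu hu_pos _).mul (contDiff_rpow_of_one_le hψ (by linarith))
    have hφ2S : HasCompactSupport φ2 := HasCompactSupport.mul_left (cptPsi p hp0.ne')
    have hgrad2 : ∀ x, gradient φ2 x
        = ((-2*β-p+1) * u x ^ ((-2*β-p+1) - 1) * ψ x ^ p) • gradient u x
          + (p * ψ x ^ (p - 1) * u x ^ (-2*β-p+1)) • gradient ψ x := by
      intro x
      rw [hφ2def]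
      exact grad_rpow_mul u ψ hu hψ hu_pos (-2*β-p+1) p (by linarith) x
    have hw2 := weak φ2 hφ2C hφ2S
    have eL : (fun x => w x * ‖gradient u x‖ ^ (p-2) * ⟪gradient u x, gradient φ2 x⟫)
        = fun x => (-(2*β+p-1)) * II x + p * MI x := by
      funext x
      rw [hgrad2 x, inner_add_right, real_inner_smul_right, real_inner_smul_right,
        real_inner_self_eq_norm_sq, show (-2*β-p+1) - 1 = -2*β-p by ring]
      simp only [hIIdef, hMIdef]
      rw [← rpow_sub2_mul_sq (norm_nonneg (gradient u x)) hp]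
      ring
    have eR : (fun x => g x * (-(u x ^ (-δ)) - u x ^ (-γ)) * φ2 x)
        = fun x => -(LIf x) := by
      funext x
      simp only [hφ2def, hLIdef]
      ring
    rw [eL, eR, integral_neg,
      integral_add ((hIntII).const_mul _) ((hIntMI).const_mul _),
      integral_const_mul, integral_const_mul] at hw2
    linarith only [hw2]
  -- step C : Cauchy-Schwarz
  have hMJ : ∫ x, MI x ≤ ∫ x, JI x := by
    refine integral_mono_ae hIntMI hIntJI ?_
    filter_upwards [hw_pos] with x hwx
    have base : 0 ≤ w x * (‖gradient u x‖ ^ (p-2) * (u x ^ (-2*β-p+1) * ψ x ^ (p-1))) :=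
      mul_nonneg hwx.le (mul_nonneg (Real.rpow_nonneg (norm_nonneg _) _)
        (mul_nonneg (Real.rpow_nonneg (hu_pos x).le _) (Real.rpow_nonneg (hψ0 x) _)))
    have cs : ⟪gradient u x, gradient ψ x⟫ ≤ ‖gradient u x‖ * ‖gradient ψ x‖ :=
      real_inner_le_norm _ _
    have e1 : MI x = (w x * (‖gradient u x‖ ^ (p-2) * (u x ^ (-2*β-p+1) * ψ x ^ (p-1))))
        * ⟪gradient u x, gradient ψ x⟫ := by
      simp only [hMIdef]; ring
    have e2 : JI x = (w x * (‖gradient u x‖ ^ (p-2) * (u x ^ (-2*β-p+1) * ψ x ^ (p-1))))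
        * (‖gradient u x‖ * ‖gradient ψ x‖) := by
      simp only [hJIdef]
      rw [← rpow_sub2_mul_self (norm_nonneg (gradient u x)) hp]
      ring
    rw [e1, e2]
    exact mul_le_mul_of_nonneg_left cs base
  -- step D : Young
  have hIInn : ∀ x, 0 < w x → 0 ≤ II x := by
    intro x hwx
    simp only [hIIdef]
    exact mul_nonneg hwx.le (mul_nonneg (Real.rpow_nonneg (norm_nonneg _) _)
      (mul_nonneg (Real.rpow_nonneg (hu_pos x).le _) (Real.rpow_nonneg (hψ0 x) _)))
  have hRInn : ∀ x, 0 < w x → 0 ≤ RI x := by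
    intro x hwx
    simp only [hRIdef]
    exact mul_nonneg (mul_nonneg hwx.le (Real.rpow_nonneg (hu_pos x).le _))
      (Real.rpow_nonneg (norm_nonneg _) _)
  have hJ : ∫ x, JI x ≤ η₁ * (∫ x, II x) + C₁ * ∫ x, RI x := by
    rw [← integral_const_mul, ← integral_const_mul,
      ← integral_add ((hIntII).const_mul _) ((hIntRI).const_mul _)]
    refine integral_mono_ae hIntJI ((hIntII.const_mul _).add (hIntRI.const_mul _)) ?_
    filter_upwards [hw_pos] with x hwx
    have hy := hC₁ (II x) (RI x) (hIInn x hwx) (hRInn x hwx)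
    rw [show 1 - (p-1)/p = 1/p by field_simp; ring] at hy
    have hid : (II x) ^ ((p-1)/p) * (RI x) ^ (1/p) = JI x := by
      simp only [hIIdef, hRIdef, hJIdef]
      rw [Real.mul_rpow hwx.le (mul_nonneg (Real.rpow_nonneg (norm_nonneg _) _)
          (mul_nonneg (Real.rpow_nonneg (hu_pos x).le _) (Real.rpow_nonneg (hψ0 x) _))),
        Real.mul_rpow (Real.rpow_nonneg (norm_nonneg _) _)
          (mul_nonneg (Real.rpow_nonneg (hu_pos x).le _) (Real.rpow_nonneg (hψ0 x) _)),
        Real.mul_rpow (Real.rpow_nonneg (hu_pos x).le _) (Real.rpow_nonneg (hψ0 x) _),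
        Real.mul_rpow (mul_nonneg hwx.le (Real.rpow_nonneg (hu_pos x).le _))
          (Real.rpow_nonneg (norm_nonneg _) _),
        Real.mul_rpow hwx.le (Real.rpow_nonneg (hu_pos x).le _),
        ← Real.rpow_mul (norm_nonneg _), ← Real.rpow_mul (hu_pos x).le,
        ← Real.rpow_mul (hψ0 x), ← Real.rpow_mul (norm_nonneg _),
        ← Real.rpow_mul (hu_pos x).le,
        show p * ((p-1)/p) = p - 1 by field_simp,
        show p * (1/p) = 1 by field_simp, Real.rpow_one]
      have ew : w x ^ ((p-1)/p) * w x ^ (1/p) = w x := by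
        rw [← Real.rpow_add hwx, show (p-1)/p + 1/p = 1 by field_simp; ring, Real.rpow_one]
      have eu : u x ^ ((-2*β-p) * ((p-1)/p)) * u x ^ (-2*β * (1/p)) = u x ^ (-2*β-p+1) := by
        rw [← Real.rpow_add (hu_pos x)]
        congr 1
        field_simp
        ring
      calc w x ^ ((p-1)/p) * (‖gradient u x‖ ^ (p-1) * (u x ^ ((-2*β-p) * ((p-1)/p))
              * ψ x ^ (p-1))) * (w x ^ (1/p) * u x ^ (-2*β * (1/p)) * ‖gradient ψ x‖)
          = (w x ^ ((p-1)/p) * w x ^ (1/p)) * (‖gradient u x‖ ^ (p-1)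
              * ((u x ^ ((-2*β-p) * ((p-1)/p)) * u x ^ (-2*β * (1/p)))
              * (ψ x ^ (p-1) * ‖gradient ψ x‖))) := by ring
        _ = w x * (‖gradient u x‖ ^ (p-1) * (u x ^ (-2*β-p+1)
              * (ψ x ^ (p-1) * ‖gradient ψ x‖))) := by rw [ew, eu]
    rw [hid] at hy
    exact hy
  have hK : ∫ x, KI x ≤ η₂ * (∫ x, II x) + C₂ * ∫ x, RI x := by
    rw [← integral_const_mul, ← integral_const_mul,
      ← integral_add ((hIntII).const_mul _) ((hIntRI).const_mul _)]
    refine integral_mono_ae hIntKI ((hIntII.const_mul _).add (hIntRI.const_mul _)) ?_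
    filter_upwards [hw_pos] with x hwx
    have hy := hC₂ (II x) (RI x) (hIInn x hwx) (hRInn x hwx)
    rw [show 1 - (p-2)/p = 2/p by field_simp; ring] at hy
    have hid : (II x) ^ ((p-2)/p) * (RI x) ^ (2/p) = KI x := by
      simp only [hIIdef, hRIdef, hKIdef]
      rw [Real.mul_rpow hwx.le (mul_nonneg (Real.rpow_nonneg (norm_nonneg _) _)
          (mul_nonneg (Real.rpow_nonneg (hu_pos x).le _) (Real.rpow_nonneg (hψ0 x) _))),
        Real.mul_rpow (Real.rpow_nonneg (norm_nonneg _) _)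
          (mul_nonneg (Real.rpow_nonneg (hu_pos x).le _) (Real.rpow_nonneg (hψ0 x) _)),
        Real.mul_rpow (Real.rpow_nonneg (hu_pos x).le _) (Real.rpow_nonneg (hψ0 x) _),
        Real.mul_rpow (mul_nonneg hwx.le (Real.rpow_nonneg (hu_pos x).le _))
          (Real.rpow_nonneg (norm_nonneg _) _),
        Real.mul_rpow hwx.le (Real.rpow_nonneg (hu_pos x).le _),
        ← Real.rpow_mul (norm_nonneg _), ← Real.rpow_mul (hu_pos x).le,
        ← Real.rpow_mul (hψ0 x), ← Real.rpow_mul (norm_nonneg _),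
        ← Real.rpow_mul (hu_pos x).le,
        show p * ((p-2)/p) = p - 2 by field_simp,
        show p * (2/p) = (2:ℝ) by field_simp,
        show ((2:ℝ)) = ((2:ℕ):ℝ) by norm_num, Real.rpow_natCast]
      have ew : w x ^ ((p-2)/p) * w x ^ (2/p) = w x := by
        rw [← Real.rpow_add hwx, show (p-2)/p + 2/p = 1 by field_simp; ring, Real.rpow_one]
      have eu : u x ^ ((-2*β-p) * ((p-2)/p)) * u x ^ (-2*β * (2/p)) = u x ^ (-2*β-p+2) := by
        rw [← Real.rpow_add (hu_pos x)]
        congr 1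
        field_simp
        ring
      calc w x ^ ((p-2)/p) * (‖gradient u x‖ ^ (p-2) * (u x ^ ((-2*β-p) * ((p-2)/p))
              * ψ x ^ (p-2))) * (w x ^ (2/p) * u x ^ (-2*β * (2/p)) * ‖gradient ψ x‖ ^ (2:ℕ))
          = (w x ^ ((p-2)/p) * w x ^ (2/p)) * (‖gradient u x‖ ^ (p-2)
              * ((u x ^ ((-2*β-p) * ((p-2)/p)) * u x ^ (-2*β * (2/p)))
              * (ψ x ^ (p-2) * ‖gradient ψ x‖ ^ (2:ℕ)))) := by ring
        _ = w x * (‖gradient u x‖ ^ (p-2) * (u x ^ (-2*β-p+2)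
              * (ψ x ^ (p-2) * ‖gradient ψ x‖ ^ (2:ℕ)))) := by rw [ew, eu]
    rw [hid] at hy
    exact hy
  -- assembly
  have h2 : d * (∫ x, II x) ≤ (∫ x, LIf x) + (p * C₁) * ∫ x, RI x := by
    have m1 : p * ∫ x, MI x ≤ p * ∫ x, JI x := mul_le_mul_of_nonneg_left hMJ hp0.le
    have m2 : p * ∫ x, JI x ≤ p * (η₁ * (∫ x, II x) + C₁ * ∫ x, RI x) :=
      mul_le_mul_of_nonneg_left hJ hp0.le
    have h2t : 2*τ+1 = 2*β+p-1 := by rw [hτ]; ring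
    rw [hddef, h2t]
    nlinarith only [hB, m1, m2]
  have h1 : δ * (∫ x, LIf x) ≤ A1 * (∫ x, II x) + (Q * C₂) * ∫ x, RI x := by
    have m3 : Q * ∫ x, KI x ≤ Q * (η₂ * (∫ x, II x) + C₂ * ∫ x, RI x) :=
      mul_le_mul_of_nonneg_left hK hQ.le
    rw [hA1def]
    nlinarith only [hA, m3]
  have h3 : (δ * d - A1) * (∫ x, LIf x)
      ≤ (A1 * (p * C₁) + (Q * C₂) * d) * ∫ x, RI x := by
    nlinarith only [mul_le_mul_of_nonneg_left h2 hA1.le, mul_le_mul_of_nonneg_left h1 hd.le]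
  have h4 : (∫ x, LIf x) ≤ ((A1 * (p * C₁) + (Q * C₂) * d) / (δ * d - A1)) * ∫ x, RI x := by
    rw [div_mul_eq_mul_div, le_div_iff₀ hden]
    linarith only [h3]
  nlinarith only [h4, hRnn]
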